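/- Fix N ≥ 1, constants b > 0, c ≥ 0, and 0 < κ < 1 such that b ≥ (1 + c) / κ^{1/N}. Let λ denote Lebesgue measure on ℝ^N, let A ⊆ ∏_{k=1}^N [−(1+c), 1+c] and B ⊆ ℝ^N be measurable with 0 < λ(A) and 0 < λ(B) < ∞, let ρ be the uniform probability density on the cube [−b,b]^N (ρ(z) = (2b)^{−N} for z ∈ [−b,b]^N and 0 otherwise), and let F : A → ℝ^N be measurable satisfying the support condition: for every x ∈ A, ρ(y − F(x)) = 0 for almost every y ∉ B. Then the composition operator M : L²(B) → L²(A), (M v)(x) = ∫_B ρ(y − F(x)) v(y) dy, and the transfer operator N̂ : L²(A) → L²(B), (N̂ p)(y) = ∫_A ρ(y − F(x)) p(x) dx, both have squared operator norm at most ((1+c)/b)^N ≤ κ, independently of the neural network weights. Moreover, for the input layer, if λ(A) ≤ (2b)^N κ then the same operators have squared operator norm at most κ. -/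

import Mathlib

open MeasureTheory


private lemma cube_meas' (N : ℕ) (w : Fin N → ℝ) (r : ℝ) :
    MeasurableSet {y : Fin N → ℝ | ∀ i, |y i - w i| ≤ r} := by
  have h : {y : Fin N → ℝ | ∀ i, |y i - w i| ≤ r}
      = Set.pi Set.univ (fun i => Set.Icc (w i - r) (w i + r)) := by
    ext y
    simp only [Set.mem_setOf_eq, Set.mem_pi, Set.mem_univ, true_implies, Set.mem_Icc, abs_le]
    constructor <;> intro h i <;> obtain ⟨h1, h2⟩ := h i <;> constructor <;> linarith
  rw [h]
  exact MeasurableSet.univ_pi fun _ => measurableSet_Icc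

private lemma cube_meas (N : ℕ) (r : ℝ) :
    MeasurableSet {z : Fin N → ℝ | ∀ i, |z i| ≤ r} := by
  have := cube_meas' N 0 r
  simpa using this

private lemma cube_volume (N : ℕ) (w : Fin N → ℝ) (r : ℝ) :
    volume {y : Fin N → ℝ | ∀ i, |y i - w i| ≤ r} = ENNReal.ofReal (2 * r) ^ N := by
  have h : {y : Fin N → ℝ | ∀ i, |y i - w i| ≤ r}
      = Set.pi Set.univ (fun i => Set.Icc (w i - r) (w i + r)) := by
    ext y
    simp only [Set.mem_setOf_eq, Set.mem_pi, Set.mem_univ, true_implies, Set.mem_Icc, abs_le]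
    constructor <;> intro h i <;> obtain ⟨h1, h2⟩ := h i <;> constructor <;> linarith
  rw [h, volume_pi_pi]
  simp only [Real.volume_Icc, show ∀ i : Fin N, w i + r - (w i - r) = 2 * r from fun i => by ring]
  simp

private lemma cs_L2 {α : Type*} [MeasurableSpace α] {μ : Measure α} {f g : α → ℝ}
    (hf : MemLp f 2 μ) (hg : MemLp g 2 μ) :
    (∫ a, f a * g a ∂μ) * (∫ a, f a * g a ∂μ) ≤
      (∫ a, f a * f a ∂μ) * (∫ a, g a * g a ∂μ) := by
  set F := hf.toLp f with hF
  set G := hg.toLp g with hG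
  have hFf := hf.coeFn_toLp
  have hGg := hg.coeFn_toLp
  have h1 : (inner ℝ F G : ℝ) = ∫ a, f a * g a ∂μ := by
    rw [L2.inner_def]
    refine integral_congr_ae ?_
    filter_upwards [hFf, hGg] with a ha hb
    simp [hF, hG, ha, hb, RCLike.inner_apply, mul_comm]
  have h2 : (inner ℝ F F : ℝ) = ∫ a, f a * f a ∂μ := by
    rw [L2.inner_def]
    refine integral_congr_ae ?_
    filter_upwards [hFf] with a ha
    simp [hF, ha, RCLike.inner_apply, sq]
  have h3 : (inner ℝ G G : ℝ) = ∫ a, g a * g a ∂μ := by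
    rw [L2.inner_def]
    refine integral_congr_ae ?_
    filter_upwards [hGg] with a ha
    simp [hG, ha, RCLike.inner_apply, sq]
  have := real_inner_mul_inner_self_le F G
  rwa [h1, h2, h3] at this

private lemma norm_sq_L2 {α : Type*} [MeasurableSpace α] {μ : Measure α} (u : Lp ℝ 2 μ) :
    ‖u‖ ^ 2 = ∫ a, u a * u a ∂μ := by
  rw [← real_inner_self_eq_norm_sq, L2.inner_def]
  simp [RCLike.inner_apply, sq]

private lemma opnorm_sq_le {α β : Type*} [MeasurableSpace α] [MeasurableSpace β]
    {μ : Measure α} {ν : Measure β}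
    (op : Lp ℝ 2 μ →L[ℝ] Lp ℝ 2 ν) {S : ℝ} (hS : 0 ≤ S)
    (h : ∀ u, ‖op u‖ ^ 2 ≤ S * ‖u‖ ^ 2) : ‖op‖ ^ 2 ≤ S := by
  have h1 : ‖op‖ ≤ Real.sqrt S := by
    refine op.opNorm_le_bound (Real.sqrt_nonneg S) fun u => ?_
    have h2 : ‖op u‖ = Real.sqrt (‖op u‖ ^ 2) := (Real.sqrt_sq (norm_nonneg _)).symm
    rw [h2]
    calc Real.sqrt (‖op u‖ ^ 2) ≤ Real.sqrt (S * ‖u‖ ^ 2) := Real.sqrt_le_sqrt (h u)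
      _ = Real.sqrt S * ‖u‖ := by
          rw [Real.sqrt_mul hS, Real.sqrt_sq (norm_nonneg _)]
  calc ‖op‖ ^ 2 ≤ Real.sqrt S ^ 2 := pow_le_pow_left₀ (norm_nonneg _) h1 2
    _ = S := Real.sq_sqrt hS


/-- **Uniform noise makes the one-layer operators contractions.** The layer noise has
i.i.d. components uniform on `[-b, b]` (density `ρ`), `c` is the previous layer's noise
amplitude so the range `A` of the layer input is contained in the cube
`[-(1+c), 1+c]^N`, and `b ≥ (1+c)/κ^{1/N}` with `0 < κ < 1`. Then the composition
operator `M : L²(B) → L²(A)` and the transfer operator `N̂ : L²(A) → L²(B)` both have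
squared operator norm at most `((1+c)/b)^N ≤ κ`, independently of the neural network
weights. Moreover, for the input layer, if `λ(A) ≤ (2b)^N κ` then the same operators
have squared operator norm at most `κ`. -/
theorem uniform_noise_contraction
    (N : ℕ) (hN : 1 ≤ N) (b c κ : ℝ)
    (hb : 0 < b) (hc : 0 ≤ c) (hκ0 : 0 < κ) (hκ1 : κ < 1)
    (hbκ : (1 + c) / κ ^ ((N : ℝ)⁻¹) ≤ b)
    (A B : Set (Fin N → ℝ)) (hAmeas : MeasurableSet A) (hBmeas : MeasurableSet B)
    (hAcube : A ⊆ {x : Fin N → ℝ | ∀ i, |x i| ≤ 1 + c})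
    (hA0 : 0 < volume A) (hB0 : 0 < volume B) (hBfin : volume B < ⊤)
    (ρ : (Fin N → ℝ) → ℝ)
    (hρ : ρ = Set.indicator {z : Fin N → ℝ | ∀ i, |z i| ≤ b}
      (fun _ => ((2 * b) ^ N)⁻¹))
    (F : (Fin N → ℝ) → (Fin N → ℝ)) (hF : Measurable F)
    (hsupp : ∀ x ∈ A, ∀ᵐ y ∂volume, y ∉ B → ρ (y - F x) = 0)
    (M : Lp ℝ 2 (volume.restrict B) →L[ℝ] Lp ℝ 2 (volume.restrict A))
    (hM : ∀ v, ∀ᵐ x ∂volume.restrict A, M v x = ∫ y in B, ρ (y - F x) * v y)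
    (T : Lp ℝ 2 (volume.restrict A) →L[ℝ] Lp ℝ 2 (volume.restrict B))
    (hT : ∀ p, ∀ᵐ y ∂volume.restrict B, T p y = ∫ x in A, ρ (y - F x) * p x) :
    ‖M‖ ^ 2 ≤ ((1 + c) / b) ^ N ∧ ‖T‖ ^ 2 ≤ ((1 + c) / b) ^ N
      ∧ ((1 + c) / b) ^ N ≤ κ
      ∧ ((volume A).toReal ≤ (2 * b) ^ N * κ → ‖M‖ ^ 2 ≤ κ ∧ ‖T‖ ^ 2 ≤ κ) := by
  have hb2 : (0:ℝ) < 2 * b := by linarith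
  have hbN : (0:ℝ) < (2 * b) ^ N := pow_pos hb2 N
  set D : ℝ := ((2 * b) ^ N)⁻¹ with hDdef
  have hD : 0 < D := inv_pos.mpr hbN
  -- finiteness of A
  have hAsub : A ⊆ {y : Fin N → ℝ | ∀ i, |y i - (0 : Fin N → ℝ) i| ≤ 1 + c} := by
    intro x hx
    simpa using hAcube hx
  have hAvol : volume A ≤ ENNReal.ofReal (2 * (1 + c)) ^ N :=
    (measure_mono hAsub).trans_eq (cube_volume N 0 (1 + c))
  have hAfin : volume A ≠ ⊤ :=
    ne_top_of_le_ne_top (ENNReal.pow_ne_top ENNReal.ofReal_ne_top) hAvol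
  haveI : IsFiniteMeasure (volume.restrict A) :=
    ⟨by rw [Measure.restrict_apply_univ]; exact lt_top_iff_ne_top.mpr hAfin⟩
  haveI : IsFiniteMeasure (volume.restrict B) :=
    ⟨by rw [Measure.restrict_apply_univ]; exact hBfin⟩
  -- facts about ρ
  have hρmeas : Measurable ρ := by
    rw [hρ]; exact measurable_const.indicator (cube_meas N b)
  have hρ0 : ∀ z, 0 ≤ ρ z := fun z => by
    rw [hρ]; exact Set.indicator_nonneg (fun _ _ => hD.le) z
  have hρle : ∀ z, ρ z ≤ D := fun z => by
    rw [hρ]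
    by_cases h : z ∈ {z : Fin N → ℝ | ∀ i, |z i| ≤ b}
    · rw [Set.indicator_of_mem h]
    · rw [Set.indicator_of_notMem h]; exact hD.le
  set k : (Fin N → ℝ) → (Fin N → ℝ) → ℝ := fun x y => ρ (y - F x) with hkdef
  have hkmeasx : ∀ x, Measurable (fun y => k x y) := fun x =>
    hρmeas.comp (measurable_id.sub measurable_const)
  have hkmeasy : ∀ y, Measurable (fun x => k x y) := fun y =>
    hρmeas.comp (measurable_const.sub hF)
  have hknn : ∀ x y, 0 ≤ k x y := fun x y => hρ0 _
  have hkle : ∀ x y, k x y ≤ D := fun x y => hρle _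
  have hkabs : ∀ x y, ‖k x y‖ ≤ D := fun x y => by
    rw [Real.norm_eq_abs, abs_of_nonneg (hknn x y)]; exact hkle x y
  have hkMemB : ∀ x, MemLp (fun y => k x y) 2 (volume.restrict B) := fun x =>
    MemLp.mono_exponent (memLp_top_of_bound (hkmeasx x).aestronglyMeasurable D
      (Filter.Eventually.of_forall fun y => hkabs x y)) le_top
  have hkMemA : ∀ y, MemLp (fun x => k x y) 2 (volume.restrict A) := fun y =>
    MemLp.mono_exponent (memLp_top_of_bound (hkmeasy y).aestronglyMeasurable D
      (Filter.Eventually.of_forall fun x => hkabs x y)) le_top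
  -- the square of k is an indicator of a shifted cube
  have hksq : ∀ x y, k x y * k x y
      = Set.indicator {y' : Fin N → ℝ | ∀ i, |y' i - F x i| ≤ b} (fun _ => D * D) y := by
    intro x y
    have hmem : (y - F x ∈ {z : Fin N → ℝ | ∀ i, |z i| ≤ b})
        ↔ y ∈ {y' : Fin N → ℝ | ∀ i, |y' i - F x i| ≤ b} := by
      simp [Set.mem_setOf_eq]
    by_cases h : y ∈ {y' : Fin N → ℝ | ∀ i, |y' i - F x i| ≤ b}
    · rw [Set.indicator_of_mem h]
      show ρ (y - F x) * ρ (y - F x) = D * D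
      rw [hρ, Set.indicator_of_mem (hmem.mpr h)]
    · rw [Set.indicator_of_notMem h]
      show ρ (y - F x) * ρ (y - F x) = 0
      rw [hρ, Set.indicator_of_notMem (fun hh => h (hmem.mp hh))]
      ring
  -- bound on ∫_B k(x,·)²
  have hsqB : ∀ x, (∫ y in B, k x y * k x y) ≤ D := by
    intro x
    have h1 : (∫ y in B, k x y * k x y)
        = ((volume.restrict B) {y' : Fin N → ℝ | ∀ i, |y' i - F x i| ≤ b}).toReal • (D * D) := by
      rw [show (fun y => k x y * k x y)
          = Set.indicator {y' : Fin N → ℝ | ∀ i, |y' i - F x i| ≤ b} (fun _ => D * D)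
          from funext fun y => hksq x y]
      exact integral_indicator_const _ (cube_meas' N (F x) b)
    rw [h1, smul_eq_mul]
    have h2 : ((volume.restrict B) {y' : Fin N → ℝ | ∀ i, |y' i - F x i| ≤ b}).toReal
        ≤ (2 * b) ^ N := by
      have h3 : (volume.restrict B) {y' : Fin N → ℝ | ∀ i, |y' i - F x i| ≤ b}
          ≤ ENNReal.ofReal (2 * b) ^ N := by
        refine le_trans (Measure.restrict_le_self _) ?_
        exact le_of_eq (cube_volume N (F x) b)
      calc ((volume.restrict B) {y' : Fin N → ℝ | ∀ i, |y' i - F x i| ≤ b}).toReal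
          ≤ (ENNReal.ofReal (2 * b) ^ N).toReal :=
            ENNReal.toReal_mono (ENNReal.pow_ne_top ENNReal.ofReal_ne_top) h3
        _ = (2 * b) ^ N := by
            rw [ENNReal.toReal_pow, ENNReal.toReal_ofReal hb2.le]
    calc ((volume.restrict B) {y' : Fin N → ℝ | ∀ i, |y' i - F x i| ≤ b}).toReal * (D * D)
        ≤ (2 * b) ^ N * (D * D) := by
          exact mul_le_mul_of_nonneg_right h2 (mul_nonneg hD.le hD.le)
      _ = D := by
          rw [hDdef]
          field_simp
  set S : ℝ := (volume A).toReal * D with hSdef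
  have hS0 : 0 ≤ S := mul_nonneg ENNReal.toReal_nonneg hD.le
  -- bound for M
  have hMkey : ∀ v : Lp ℝ 2 (volume.restrict B), ‖M v‖ ^ 2 ≤ S * ‖v‖ ^ 2 := by
    intro v
    have hv2 : ‖v‖ ^ 2 = ∫ y in B, v y * v y := norm_sq_L2 v
    have hvnn : 0 ≤ ∫ y in B, v y * v y := integral_nonneg fun y => mul_self_nonneg _
    have hstep : ∀ᵐ x ∂(volume.restrict A), M v x * M v x ≤ D * ‖v‖ ^ 2 := by
      filter_upwards [hM v] with x hx
      rw [hx, hv2]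
      calc (∫ y in B, k x y * v y) * (∫ y in B, k x y * v y)
          ≤ (∫ y in B, k x y * k x y) * (∫ y in B, v y * v y) :=
            cs_L2 (hkMemB x) (Lp.memLp v)
        _ ≤ D * (∫ y in B, v y * v y) :=
            mul_le_mul_of_nonneg_right (hsqB x) hvnn
    have hint1 : Integrable (fun x => M v x * M v x) (volume.restrict A) := by
      have := (Lp.memLp (M v)).integrable_sq
      simpa [pow_two] using this
    have hMv2 : ‖M v‖ ^ 2 = ∫ x in A, M v x * M v x := norm_sq_L2 (M v)
    rw [hMv2]
    calc (∫ x in A, M v x * M v x) ≤ ∫ _x in A, D * ‖v‖ ^ 2 :=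
          integral_mono_ae hint1 (integrable_const _) hstep
      _ = (volume A).toReal * (D * ‖v‖ ^ 2) := by
          rw [integral_const, measureReal_restrict_apply_univ, measureReal_def, smul_eq_mul]
      _ = S * ‖v‖ ^ 2 := by rw [hSdef]; ring
  -- bound for T
  have hjointmeas : Measurable (fun q : (Fin N → ℝ) × (Fin N → ℝ) => k q.1 q.2 * k q.1 q.2) := by
    have h : Measurable (fun q : (Fin N → ℝ) × (Fin N → ℝ) => k q.1 q.2) :=
      hρmeas.comp (measurable_snd.sub (hF.comp measurable_fst))
    exact h.mul h
  have hjointint : Integrable (Function.uncurry fun x y => k x y * k x y)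
      ((volume.restrict A).prod (volume.restrict B)) := by
    refine MemLp.integrable le_top ?_
    refine memLp_top_of_bound hjointmeas.aestronglyMeasurable (D * D)
      (Filter.Eventually.of_forall fun q => ?_)
    rw [Function.uncurry, Real.norm_eq_abs, abs_of_nonneg (mul_self_nonneg _)]
    exact mul_le_mul (hkle _ _) (hkle _ _) (hknn _ _) hD.le
  have hgmeas : AEStronglyMeasurable (fun y => ∫ x in A, k x y * k x y)
      (volume.restrict B) := by
    have := (hjointmeas.stronglyMeasurable).integral_prod_left'
      (μ := volume.restrict A)
    exact this.aestronglyMeasurable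
  have hgbd : ∀ y, ‖∫ x in A, k x y * k x y‖ ≤ D * D * (volume A).toReal := by
    intro y
    have := norm_integral_le_of_norm_le_const
      (μ := volume.restrict A) (f := fun x => k x y * k x y) (C := D * D)
      (Filter.Eventually.of_forall fun x => by
        rw [Real.norm_eq_abs, abs_of_nonneg (mul_self_nonneg _)]
        exact mul_le_mul (hkle _ _) (hkle _ _) (hknn _ _) hD.le)
    rwa [measureReal_restrict_apply_univ, measureReal_def] at this
  have hgint : Integrable (fun y => ∫ x in A, k x y * k x y) (volume.restrict B) :=
    MemLp.integrable le_top (memLp_top_of_bound hgmeas _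
      (Filter.Eventually.of_forall hgbd))
  have hswap : (∫ y in B, ∫ x in A, k x y * k x y) = ∫ x in A, ∫ y in B, k x y * k x y :=
    (integral_integral_swap hjointint).symm
  have hinnerAS : AEStronglyMeasurable (fun x => ∫ y in B, k x y * k x y)
      (volume.restrict A) :=
    ((hjointmeas.stronglyMeasurable).integral_prod_right'
      (ν := volume.restrict B)).aestronglyMeasurable
  have hinnerint : Integrable (fun x => ∫ y in B, k x y * k x y) (volume.restrict A) := by
    refine MemLp.integrable le_top (memLp_top_of_bound hinnerAS D
      (Filter.Eventually.of_forall fun x => ?_))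
    rw [Real.norm_eq_abs, abs_of_nonneg (integral_nonneg fun y => mul_self_nonneg _)]
    exact hsqB x
  have hgS : (∫ y in B, ∫ x in A, k x y * k x y) ≤ S := by
    rw [hswap]
    calc (∫ x in A, ∫ y in B, k x y * k x y) ≤ ∫ _x in A, D :=
        integral_mono_ae hinnerint (integrable_const _)
          (Filter.Eventually.of_forall fun x => hsqB x)
      _ = (volume A).toReal * D := by
          rw [integral_const, measureReal_restrict_apply_univ, measureReal_def, smul_eq_mul]
      _ = S := hSdef.symm
  have hTkey : ∀ p : Lp ℝ 2 (volume.restrict A), ‖T p‖ ^ 2 ≤ S * ‖p‖ ^ 2 := by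
    intro p
    have hp2 : ‖p‖ ^ 2 = ∫ x in A, p x * p x := norm_sq_L2 p
    have hstep : ∀ᵐ y ∂(volume.restrict B),
        T p y * T p y ≤ (∫ x in A, k x y * k x y) * ‖p‖ ^ 2 := by
      filter_upwards [hT p] with y hy
      rw [hy, hp2]
      exact cs_L2 (hkMemA y) (Lp.memLp p)
    have hint1 : Integrable (fun y => T p y * T p y) (volume.restrict B) := by
      have := (Lp.memLp (T p)).integrable_sq
      simpa [pow_two] using this
    have hTp2 : ‖T p‖ ^ 2 = ∫ y in B, T p y * T p y := norm_sq_L2 (T p)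
    rw [hTp2]
    calc (∫ y in B, T p y * T p y)
        ≤ ∫ y in B, (∫ x in A, k x y * k x y) * ‖p‖ ^ 2 :=
          integral_mono_ae hint1 (hgint.mul_const _) hstep
      _ = (∫ y in B, ∫ x in A, k x y * k x y) * ‖p‖ ^ 2 := integral_mul_const _ _
      _ ≤ S * ‖p‖ ^ 2 :=
          mul_le_mul_of_nonneg_right hgS (sq_nonneg _)
  have hMS : ‖M‖ ^ 2 ≤ S := opnorm_sq_le M hS0 hMkey
  have hTS : ‖T‖ ^ 2 ≤ S := opnorm_sq_le T hS0 hTkey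
  -- arithmetic: S ≤ ((1+c)/b)^N
  have hmulD : ∀ r : ℝ, (2 * r) ^ N * D = (r / b) ^ N := by
    intro r
    rw [hDdef, ← div_eq_mul_inv, ← div_pow, mul_div_mul_left r b two_ne_zero]
  have hAtoReal : (volume A).toReal ≤ (2 * (1 + c)) ^ N := by
    calc (volume A).toReal ≤ (ENNReal.ofReal (2 * (1 + c)) ^ N).toReal :=
        ENNReal.toReal_mono (ENNReal.pow_ne_top ENNReal.ofReal_ne_top) hAvol
      _ = (2 * (1 + c)) ^ N := by
          rw [ENNReal.toReal_pow, ENNReal.toReal_ofReal (by linarith)]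
  have hS1 : S ≤ ((1 + c) / b) ^ N := by
    rw [hSdef, ← hmulD (1 + c)]
    exact mul_le_mul_of_nonneg_right hAtoReal hD.le
  -- arithmetic: ((1+c)/b)^N ≤ κ
  have hNne : (N : ℝ) ≠ 0 := Nat.cast_ne_zero.mpr (by omega)
  have hrpow : (0:ℝ) < κ ^ ((N : ℝ)⁻¹) := Real.rpow_pos_of_pos hκ0 _
  have h1c : 1 + c ≤ b * κ ^ ((N : ℝ)⁻¹) := (div_le_iff₀ hrpow).mp hbκ
  have hdivle : (1 + c) / b ≤ κ ^ ((N : ℝ)⁻¹) := by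
    rw [div_le_iff₀ hb]
    linarith [h1c]
  have hκpow : (κ ^ ((N : ℝ)⁻¹)) ^ N = κ := by
    rw [← Real.rpow_natCast (κ ^ ((N : ℝ)⁻¹)) N, ← Real.rpow_mul hκ0.le,
      inv_mul_cancel₀ hNne, Real.rpow_one]
  have hSκ : ((1 + c) / b) ^ N ≤ κ := by
    calc ((1 + c) / b) ^ N ≤ (κ ^ ((N : ℝ)⁻¹)) ^ N :=
        pow_le_pow_left₀ (by positivity) hdivle N
      _ = κ := hκpow
  refine ⟨hMS.trans hS1, hTS.trans hS1, hSκ, fun h => ?_⟩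
  have hSle : S ≤ κ := by
    rw [hSdef]
    calc (volume A).toReal * D ≤ ((2 * b) ^ N * κ) * D :=
        mul_le_mul_of_nonneg_right h hD.le
      _ = κ * ((2 * b) ^ N * D) := by ring
      _ = κ := by rw [hDdef, mul_inv_cancel₀ hbN.ne', mul_one]
  exact ⟨hMS.trans hSle, hTS.trans hSle⟩
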